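/- Let S : ℝ^m → ℝ^m have a fixed point w* and be differentiable at w*, and suppose all (complex) eigenvalues of the Jacobian A of S at w* have modulus at most r for some r < 1. Then there exist an open neighborhood U of w*, a constant β ∈ (r, 1), and an invertible linear change of coordinates in which the iterates of S starting in U converge geometrically to w*: in those coordinates, ‖S^k(w) − w*‖ ≤ β^k ‖w − w*‖ for all w ∈ U and k ≥ 0; in particular S^k(w^0) → w* for every w^0 ∈ U. -/

import Mathlib

set_option maxHeartbeats 1000000


open Matrix Filter
open scoped Matrix.Norms.L2Operator
open scoped MatrixOrder

namespace GeomConvAux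

variable {m : ℕ}

lemma normsq_eq (v : EuclideanSpace ℝ (Fin m)) :
    ‖v‖ ^ 2 = (WithLp.equiv 2 (Fin m → ℝ) v) ⬝ᵥ (WithLp.equiv 2 (Fin m → ℝ) v) := by
  rw [EuclideanSpace.norm_eq, Real.sq_sqrt (by positivity)]
  simp [dotProduct, Real.norm_eq_abs, ← sq, sq_abs]

lemma norm_toEuclideanLin_sq (M : Matrix (Fin m) (Fin m) ℝ) (x : EuclideanSpace ℝ (Fin m)) :
    ‖Matrix.toEuclideanLin M x‖ ^ 2 =
      (M *ᵥ (WithLp.equiv 2 (Fin m → ℝ) x)) ⬝ᵥ (M *ᵥ (WithLp.equiv 2 (Fin m → ℝ) x)) := by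
  rw [normsq_eq]
  simp

lemma norm_toEuclideanLin_le (B : Matrix (Fin m) (Fin m) ℂ) (z : EuclideanSpace ℂ (Fin m)) :
    ‖Matrix.toEuclideanLin B z‖ ≤ ‖B‖ * ‖z‖ := by
  have h := ((Matrix.toEuclideanLin (𝕜 := ℂ) (m := Fin m) (n := Fin m)).trans
      LinearMap.toContinuousLinearMap B).le_opNorm z
  exact h

lemma real_complex_bound (M : Matrix (Fin m) (Fin m) ℝ) (x : EuclideanSpace ℝ (Fin m)) :
    ‖Matrix.toEuclideanLin M x‖ ≤ ‖M.map Complex.ofReal‖ * ‖x‖ := by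
  set xf := WithLp.equiv 2 (Fin m → ℝ) x with hxf
  set z : EuclideanSpace ℂ (Fin m) :=
    (WithLp.equiv 2 (Fin m → ℂ)).symm (fun i => (xf i : ℂ)) with hz
  have hznorm : ‖z‖ = ‖x‖ := by
    rw [EuclideanSpace.norm_eq, EuclideanSpace.norm_eq]
    congr 1
    refine Finset.sum_congr rfl fun i _ => ?_
    simp only [hz, WithLp.equiv_symm_apply, PiLp.toLp_apply, Complex.norm_real]
    rfl
  have happ : Matrix.toEuclideanLin (M.map Complex.ofReal) z
      = (WithLp.equiv 2 (Fin m → ℂ)).symm (fun j => ((M *ᵥ xf) j : ℂ)) := by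
    rw [hz, WithLp.equiv_symm_apply, Matrix.toEuclideanLin_apply_piLp_toLp]
    congr 1
    funext j
    simp [Matrix.mulVec, dotProduct, Matrix.map_apply]
  have hnorm : ‖Matrix.toEuclideanLin M x‖ = ‖Matrix.toEuclideanLin (M.map Complex.ofReal) z‖ := by
    rw [happ, EuclideanSpace.norm_eq, EuclideanSpace.norm_eq]
    congr 1
    refine Finset.sum_congr rfl fun j _ => ?_
    simp [Matrix.toEuclideanLin_apply, hxf]
  rw [hnorm, ← hznorm]
  exact norm_toEuclideanLin_le _ _

lemma specrad_le (B : Matrix (Fin m) (Fin m) ℂ) {r : ℝ}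
    (h : ∀ μ ∈ spectrum ℂ B, ‖μ‖ ≤ r) :
    spectralRadius ℂ B ≤ ENNReal.ofReal r := by
  rw [spectralRadius]
  refine iSup₂_le fun μ hμ => ?_
  rw [← enorm_eq_nnnorm, ← ofReal_norm]
  exact ENNReal.ofReal_le_ofReal (h μ hμ)

lemma exists_pow_norm_le (B : Matrix (Fin m) (Fin m) ℂ) {c : ℝ} (hc : 0 < c)
    (h : spectralRadius ℂ B < ENNReal.ofReal c) :
    ∃ N, 0 < N ∧ ‖B ^ N‖ ≤ c ^ N := by
  have hg := spectrum.pow_nnnorm_pow_one_div_tendsto_nhds_spectralRadius B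
  have hev : ∀ᶠ n : ℕ in atTop, (‖B ^ n‖₊ : ENNReal) ^ (1 / (n : ℝ)) < ENNReal.ofReal c :=
    hg.eventually_lt_const h
  obtain ⟨N₀, hN₀⟩ := eventually_atTop.mp hev
  refine ⟨max N₀ 1, lt_of_lt_of_le one_pos (le_max_right _ _), ?_⟩
  set N := max N₀ 1 with hN
  have hN1 : 1 ≤ N := le_max_right _ _
  have hNne : (N : ℝ) ≠ 0 := by positivity
  have hlt := hN₀ N (le_max_left _ _)
  have h2 : (‖B ^ N‖₊ : ENNReal) ≤ (ENNReal.ofReal c) ^ N := by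
    calc (‖B ^ N‖₊ : ENNReal) = ((‖B ^ N‖₊ : ENNReal) ^ (1 / (N : ℝ))) ^ (N : ℕ) := by
          rw [← ENNReal.rpow_natCast _ N, ← ENNReal.rpow_mul, one_div,
            inv_mul_cancel₀ hNne, ENNReal.rpow_one]
      _ ≤ (ENNReal.ofReal c) ^ N := pow_le_pow_left' hlt.le N
  rw [← ENNReal.ofReal_pow hc.le] at h2
  have h3 := ENNReal.toReal_le_of_le_ofReal (by positivity) h2
  simpa using h3

lemma toEuclideanLin_mul (M N : Matrix (Fin m) (Fin m) ℝ) (x : EuclideanSpace ℝ (Fin m)) :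
    Matrix.toEuclideanLin (M * N) x = Matrix.toEuclideanLin M (Matrix.toEuclideanLin N x) := by
  simp [Matrix.toEuclideanLin_apply, Matrix.mulVec_mulVec]

lemma toEuclideanLin_one (x : EuclideanSpace ℝ (Fin m)) :
    Matrix.toEuclideanLin (1 : Matrix (Fin m) (Fin m) ℝ) x = x := by
  simp [Matrix.toEuclideanLin_apply]

lemma sum_mulVec {ι : Type*} (s : Finset ι) (f : ι → Matrix (Fin m) (Fin m) ℝ)
    (v : Fin m → ℝ) : (∑ i ∈ s, f i) *ᵥ v = ∑ i ∈ s, f i *ᵥ v := by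
  induction s using Finset.cons_induction with
  | empty => simp
  | cons a s ha ih => simp [Finset.sum_cons, Matrix.add_mulVec, ih]

lemma dotProduct_sum' {ι : Type*} (s : Finset ι) (v : Fin m → ℝ) (w : ι → Fin m → ℝ) :
    v ⬝ᵥ (∑ i ∈ s, w i) = ∑ i ∈ s, v ⬝ᵥ w i := by
  induction s using Finset.cons_induction with
  | empty => simp
  | cons a s ha ih => simp [Finset.sum_cons, dotProduct_add, ih]

lemma dot_self_nonneg (v : Fin m → ℝ) : 0 ≤ v ⬝ᵥ v :=
  Finset.sum_nonneg fun i _ => mul_self_nonneg (v i)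

lemma dot_self_pos {v : Fin m → ℝ} (hv : v ≠ 0) : 0 < v ⬝ᵥ v := by
  have := Matrix.dotProduct_star_self_pos_iff (v := v) (R := ℝ)
  rw [star_trivial] at this
  exact this.mpr hv

end GeomConvAux



/-- Let `S : ℝ^m → ℝ^m` have a fixed point `w*`, be (Fréchet)
differentiable at `w*` with Jacobian matrix `A`, and suppose all complex eigenvalues of
`A` have modulus at most `r` for some `r < 1`.  Then there exist an open neighborhood `U`
of `w*`, a constant `β ∈ (r, 1)`, and an invertible linear change of coordinates
`L : ℝ^m ≃ₗ ℝ^m` in which the iterates of `S` starting in `U` converge geometrically to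
`w*`: `‖L (S^[k] w − w*)‖ ≤ β^k ‖L (w − w*)‖` for all `w ∈ U` and `k ≥ 0`; in particular
`S^[k] w⁰ → w*` for every `w⁰ ∈ U`. -/
theorem local_geometric_convergence_of_contraction_spectrum {m : ℕ}
    (S : EuclideanSpace ℝ (Fin m) → EuclideanSpace ℝ (Fin m))
    (wstar : EuclideanSpace ℝ (Fin m)) (hfix : S wstar = wstar)
    (A : Matrix (Fin m) (Fin m) ℝ)
    (hderiv : HasFDerivAt S
      (LinearMap.toContinuousLinearMap (Matrix.toEuclideanLin A)) wstar)
    (r : ℝ) (hr : r < 1)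
    (heig : ∀ μ ∈ spectrum ℂ (A.map fun x => (x : ℂ)), ‖μ‖ ≤ r) :
    ∃ U : Set (EuclideanSpace ℝ (Fin m)), IsOpen U ∧ wstar ∈ U ∧
      ∃ β, r < β ∧ β < 1 ∧
        ∃ L : EuclideanSpace ℝ (Fin m) ≃ₗ[ℝ] EuclideanSpace ℝ (Fin m),
          (∀ w ∈ U, ∀ k : ℕ, ‖L (S^[k] w - wstar)‖ ≤ β ^ k * ‖L (w - wstar)‖) ∧
          ∀ w0 ∈ U, Filter.Tendsto (fun k => S^[k] w0) Filter.atTop (nhds wstar) := by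
  classical
  rcases Nat.eq_zero_or_pos m with hm | hm
  · -- trivial case: the space is a subsingleton
    subst hm
    have hsub : ∀ a b : EuclideanSpace ℝ (Fin 0), a = b := fun a b => Subsingleton.elim a b
    refine ⟨Set.univ, isOpen_univ, Set.mem_univ _, (r + 1) / 2, by linarith, by linarith,
      LinearEquiv.refl ℝ _, ?_, ?_⟩
    · intro w _ k
      have : S^[k] w - wstar = 0 := by rw [hsub (S^[k] w) wstar]; exact sub_self _
      rw [this]
      have hw0 : w - wstar = (0 : EuclideanSpace ℝ (Fin 0)) := by
        rw [hsub w wstar]; exact sub_self _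
      rw [hw0]
      simp
    · intro w0 _
      have : (fun k => S^[k] w0) = fun _ => wstar := by
        funext k; exact hsub _ _
      rw [this]
      exact tendsto_const_nhds
  -- main case : m ≥ 1
  set B : Matrix (Fin m) (Fin m) ℂ := A.map (fun x => (x : ℂ)) with hB
  haveI : Nonempty (Fin m) := ⟨⟨0, hm⟩⟩
  haveI : Nontrivial (Matrix (Fin m) (Fin m) ℂ) := by
    refine ⟨0, 1, fun h => zero_ne_one (α := ℂ) ?_⟩
    have := congrFun (congrFun h (Classical.arbitrary (Fin m))) (Classical.arbitrary (Fin m))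
    simpa using this
  obtain ⟨μ, hμ⟩ := spectrum.nonempty B
  have hr0 : 0 ≤ r := le_trans (norm_nonneg μ) (heig μ hμ)
  set β1 : ℝ := (2 * r + 1) / 3 with hβ1def
  set β : ℝ := (r + 2) / 3 with hβdef
  have hβ1pos : 0 < β1 := by rw [hβ1def]; linarith
  have hrβ1 : r < β1 := by rw [hβ1def]; linarith
  have hβ1β : β1 < β := by rw [hβ1def, hβdef]; linarith
  have hβ1 : β < 1 := by rw [hβdef]; linarith
  have hβpos : 0 < β := lt_trans hβ1pos hβ1β
  have hrβ : r < β := lt_trans hrβ1 hβ1β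
  -- Step 1 : Gelfand's formula gives a power with small norm
  have hspec : spectralRadius ℂ B < ENNReal.ofReal β1 := by
    refine lt_of_le_of_lt (GeomConvAux.specrad_le B (r := r) fun ν hν => ?_)
      ((ENNReal.ofReal_lt_ofReal_iff hβ1pos).mpr hrβ1)
    simpa using heig ν hν
  obtain ⟨N, hNpos, hBN⟩ := GeomConvAux.exists_pow_norm_le B hβ1pos hspec
  have hBpow : (A ^ N).map (fun x => (x : ℂ)) = B ^ N := by
    rw [hB]
    exact map_pow (Complex.ofRealHom.mapMatrix) A N
  have hAN : ∀ x : EuclideanSpace ℝ (Fin m),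
      ‖Matrix.toEuclideanLin (A ^ N) x‖ ≤ β1 ^ N * ‖x‖ := by
    intro x
    refine le_trans (GeomConvAux.real_complex_bound (A ^ N) x) ?_
    have : ((A ^ N).map Complex.ofReal) = B ^ N := hBpow
    rw [this]
    exact mul_le_mul_of_nonneg_right hBN (norm_nonneg x)
  -- Step 2 : the Lyapunov quadratic form and its square root
  set c : ℝ := (β1 ^ 2)⁻¹ with hcdef
  have hcpos : 0 < c := by rw [hcdef]; positivity
  set G : Matrix (Fin m) (Fin m) ℝ :=
    ∑ i ∈ Finset.range N, c ^ i • ((A ^ i)ᵀ * (A ^ i)) with hGdef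
  have hqform : ∀ v : Fin m → ℝ,
      v ⬝ᵥ (G *ᵥ v) = ∑ i ∈ Finset.range N, c ^ i * ((A ^ i *ᵥ v) ⬝ᵥ (A ^ i *ᵥ v)) := by
    intro v
    rw [hGdef, GeomConvAux.sum_mulVec, GeomConvAux.dotProduct_sum']
    refine Finset.sum_congr rfl fun i _ => ?_
    rw [Matrix.smul_mulVec, dotProduct_smul, smul_eq_mul]
    congr 1
    rw [← Matrix.mulVec_mulVec, Matrix.dotProduct_mulVec, Matrix.vecMul_transpose]
  have hGherm : G.IsHermitian := by
    rw [Matrix.IsHermitian, Matrix.conjTranspose_eq_transpose_of_trivial, hGdef,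
      Matrix.transpose_sum]
    refine Finset.sum_congr rfl fun i _ => ?_
    rw [Matrix.transpose_smul, Matrix.transpose_mul, Matrix.transpose_transpose]
  have hGpd : G.PosDef := by
    refine Matrix.PosDef.of_dotProduct_mulVec_pos hGherm fun v hv => ?_
    rw [star_trivial, hqform v]
    refine Finset.sum_pos' (fun i _ => ?_) ⟨0, Finset.mem_range.mpr hNpos, ?_⟩
    · exact mul_nonneg (le_of_lt (pow_pos hcpos i)) (GeomConvAux.dot_self_nonneg _)
    · simp only [pow_zero, one_mul, Matrix.one_mulVec]
      exact GeomConvAux.dot_self_pos hv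
  set P : Matrix (Fin m) (Fin m) ℝ := CFC.sqrt G with hPdef
  have hPP : P * P = G := CFC.sqrt_mul_sqrt_self G hGpd.posSemidef.nonneg
  have hPherm : P.IsHermitian := (CFC.sqrt_nonneg G).posSemidef.1
  have hPt : Pᵀ = P := by
    rw [← Matrix.conjTranspose_eq_transpose_of_trivial]; exact hPherm
  have hPdet : IsUnit P.det := by
    have h1 : P.det * P.det = G.det := by rw [← Matrix.det_mul, hPP]
    have h2 : 0 < G.det := hGpd.det_pos
    refine isUnit_iff_ne_zero.mpr fun h => ?_
    rw [h, mul_zero] at h1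
    exact h2.ne h1
  have hPPinv : P * P⁻¹ = 1 := Matrix.mul_nonsing_inv P hPdet
  have hPinvP : P⁻¹ * P = 1 := Matrix.nonsing_inv_mul P hPdet
  set L : EuclideanSpace ℝ (Fin m) ≃ₗ[ℝ] EuclideanSpace ℝ (Fin m) :=
    LinearEquiv.ofLinear (Matrix.toEuclideanLin P) (Matrix.toEuclideanLin P⁻¹)
      (by
        refine LinearMap.ext fun x => ?_
        rw [LinearMap.comp_apply, ← GeomConvAux.toEuclideanLin_mul, hPPinv,
          GeomConvAux.toEuclideanLin_one, LinearMap.id_apply])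
      (by
        refine LinearMap.ext fun x => ?_
        rw [LinearMap.comp_apply, ← GeomConvAux.toEuclideanLin_mul, hPinvP,
          GeomConvAux.toEuclideanLin_one, LinearMap.id_apply]) with hLdef
  have hLapply : ∀ x : EuclideanSpace ℝ (Fin m), L x = Matrix.toEuclideanLin P x :=
    fun x => rfl
  have hLsymm : ∀ x : EuclideanSpace ℝ (Fin m), L.symm x = Matrix.toEuclideanLin P⁻¹ x :=
    fun x => rfl
  -- norm identity in the new coordinates
  have hLnorm : ∀ x : EuclideanSpace ℝ (Fin m), ‖L x‖ ^ 2
      = ∑ i ∈ Finset.range N, c ^ i * ‖Matrix.toEuclideanLin (A ^ i) x‖ ^ 2 := by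
    intro x
    set v : Fin m → ℝ := WithLp.equiv 2 (Fin m → ℝ) x with hv
    have h1 : ‖L x‖ ^ 2 = (P *ᵥ v) ⬝ᵥ (P *ᵥ v) := by
      rw [hLapply x]; exact GeomConvAux.norm_toEuclideanLin_sq P x
    have h2 : (P *ᵥ v) ⬝ᵥ (P *ᵥ v) = v ⬝ᵥ (G *ᵥ v) := by
      have hPtP : Pᵀ * P = G := by rw [hPt, hPP]
      rw [← hPtP, ← Matrix.mulVec_mulVec, Matrix.dotProduct_mulVec v Pᵀ,
        Matrix.vecMul_transpose]
    rw [h1, h2, hqform v]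
    refine Finset.sum_congr rfl fun i _ => ?_
    rw [GeomConvAux.norm_toEuclideanLin_sq]
  -- contraction property of the linear part in the new coordinates
  have hcontr : ∀ x : EuclideanSpace ℝ (Fin m),
      ‖L (Matrix.toEuclideanLin A x)‖ ≤ β1 * ‖L x‖ := by
    intro x
    have h0 : (0:ℝ) ≤ β1 * ‖L x‖ := by positivity
    have hsq : ‖L (Matrix.toEuclideanLin A x)‖ ^ 2 ≤ (β1 * ‖L x‖) ^ 2 := by
      rw [mul_pow, hLnorm, hLnorm]
      set u : ℕ → ℝ := fun i => ‖Matrix.toEuclideanLin (A ^ i) x‖ ^ 2 with hu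
      have hcomp : ∀ i : ℕ, Matrix.toEuclideanLin (A ^ i) (Matrix.toEuclideanLin A x)
          = Matrix.toEuclideanLin (A ^ (i + 1)) x := by
        intro i
        rw [pow_succ, GeomConvAux.toEuclideanLin_mul]
      have hds : ∑ i ∈ Finset.range N,
            c ^ i * ‖Matrix.toEuclideanLin (A ^ i) (Matrix.toEuclideanLin A x)‖ ^ 2
          = ∑ i ∈ Finset.range N, c ^ i * u (i + 1) :=
        Finset.sum_congr rfl fun i _ => by rw [hcomp i]
      rw [hds]
      have hu0 : u 0 = ‖x‖ ^ 2 := by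
        rw [hu]; simp only [pow_zero]
        rw [GeomConvAux.toEuclideanLin_one]
      have hcN : c ^ N * u N ≤ u 0 := by
        have h1 : u N ≤ (β1 ^ N * ‖x‖) ^ 2 := by
          rw [hu]
          exact pow_le_pow_left₀ (norm_nonneg _) (hAN x) 2
        have h2 : c ^ N * (β1 ^ N * ‖x‖) ^ 2 = ‖x‖ ^ 2 := by
          rw [hcdef, mul_pow (β1 ^ N) ‖x‖ 2, ← pow_mul β1 N 2, Nat.mul_comm N 2,
            pow_mul β1 2 N, ← mul_assoc, ← mul_pow, inv_mul_cancel₀ (by positivity), one_pow,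
            one_mul]
        calc c ^ N * u N ≤ c ^ N * (β1 ^ N * ‖x‖) ^ 2 :=
              mul_le_mul_of_nonneg_left h1 (le_of_lt (pow_pos hcpos N))
          _ = ‖x‖ ^ 2 := h2
          _ = u 0 := hu0.symm
      have hshift : ∑ i ∈ Finset.range N, c ^ (i + 1) * u (i + 1)
          = ∑ i ∈ Finset.range N, c ^ i * u i + c ^ N * u N - u 0 := by
        have h' := Finset.sum_range_succ' (fun i => c ^ i * u i) N
        have h'' := Finset.sum_range_succ (fun i => c ^ i * u i) N
        simp only [pow_zero, one_mul] at h' h''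
        linarith
      have hstep : ∀ i : ℕ, c ^ i * u (i + 1) = β1 ^ 2 * (c ^ (i + 1) * u (i + 1)) := by
        intro i
        rw [hcdef, pow_succ]
        have hb : β1 ^ 2 * (β1 ^ 2)⁻¹ = 1 := mul_inv_cancel₀ (by positivity)
        linear_combination (-(((β1 ^ 2)⁻¹) ^ i * u (i + 1))) * hb
      calc ∑ i ∈ Finset.range N, c ^ i * u (i + 1)
          = β1 ^ 2 * ∑ i ∈ Finset.range N, c ^ (i + 1) * u (i + 1) := by
            rw [Finset.mul_sum]; exact Finset.sum_congr rfl fun i _ => hstep i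
        _ = β1 ^ 2 * (∑ i ∈ Finset.range N, c ^ i * u i + c ^ N * u N - u 0) := by
            rw [hshift]
        _ ≤ β1 ^ 2 * ∑ i ∈ Finset.range N, c ^ i * u i := by nlinarith [sq_nonneg β1]
    calc ‖L (Matrix.toEuclideanLin A x)‖
        = Real.sqrt (‖L (Matrix.toEuclideanLin A x)‖ ^ 2) :=
          (Real.sqrt_sq (norm_nonneg _)).symm
      _ ≤ Real.sqrt ((β1 * ‖L x‖) ^ 2) := Real.sqrt_le_sqrt hsq
      _ = β1 * ‖L x‖ := Real.sqrt_sq h0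
    -- Step 3 : norm comparison constants
  have hLcont : Continuous fun w : EuclideanSpace ℝ (Fin m) => ‖L (w - wstar)‖ := by
    have h1 : Continuous fun w : EuclideanSpace ℝ (Fin m) =>
        (L : EuclideanSpace ℝ (Fin m) →ₗ[ℝ] EuclideanSpace ℝ (Fin m)) (w - wstar) :=
      (LinearMap.continuous_of_finiteDimensional _).comp (continuous_id.sub continuous_const)
    simpa using h1.norm
  obtain ⟨CP, hCPpos, hCP⟩ : ∃ CP : ℝ, 0 < CP ∧
      ∀ x : EuclideanSpace ℝ (Fin m), ‖L x‖ ≤ CP * ‖x‖ := by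
    set f := LinearMap.toContinuousLinearMap
      (L : EuclideanSpace ℝ (Fin m) →ₗ[ℝ] EuclideanSpace ℝ (Fin m)) with hfdef
    refine ⟨max ‖f‖ 1, lt_of_lt_of_le one_pos (le_max_right _ _), fun x => ?_⟩
    calc ‖L x‖ = ‖f x‖ := by rw [show f x = L x from rfl]
      _ ≤ ‖f‖ * ‖x‖ := f.le_opNorm x
      _ ≤ max ‖f‖ 1 * ‖x‖ := mul_le_mul_of_nonneg_right (le_max_left _ _) (norm_nonneg x)
  obtain ⟨CQ, hCQpos, hCQ⟩ : ∃ CQ : ℝ, 0 < CQ ∧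
      ∀ x : EuclideanSpace ℝ (Fin m), ‖x‖ ≤ CQ * ‖L x‖ := by
    set f := LinearMap.toContinuousLinearMap
      (L.symm : EuclideanSpace ℝ (Fin m) →ₗ[ℝ] EuclideanSpace ℝ (Fin m)) with hfdef
    refine ⟨max ‖f‖ 1, lt_of_lt_of_le one_pos (le_max_right _ _), fun x => ?_⟩
    calc ‖x‖ = ‖f (L x)‖ := by
          rw [show f (L x) = L.symm (L x) from rfl, LinearEquiv.symm_apply_apply]
      _ ≤ ‖f‖ * ‖L x‖ := f.le_opNorm _
      _ ≤ max ‖f‖ 1 * ‖L x‖ := mul_le_mul_of_nonneg_right (le_max_left _ _) (norm_nonneg _)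
  -- Step 4 : the nonlinear one-step estimate
  set ε : ℝ := (β - β1) / (CP * CQ) with hεdef
  have hεpos : 0 < ε := div_pos (by linarith) (mul_pos hCPpos hCQpos)
  have hlo := hderiv.isLittleO.def hεpos
  rw [hfix] at hlo
  rw [Metric.eventually_nhds_iff] at hlo
  obtain ⟨δ, hδpos, hδ⟩ := hlo
  have hstep : ∀ w : EuclideanSpace ℝ (Fin m), ‖w - wstar‖ < δ →
      ‖L (S w - wstar)‖ ≤ β * ‖L (w - wstar)‖ := by
    intro w hw
    have herr := hδ (y := w) (by rwa [dist_eq_norm])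
    simp only [LinearMap.coe_toContinuousLinearMap'] at herr
    have hsplit : S w - wstar = Matrix.toEuclideanLin A (w - wstar)
        + (S w - wstar - Matrix.toEuclideanLin A (w - wstar)) := by abel
    have hCPne : CP ≠ 0 := hCPpos.ne'
    have hCQne : CQ ≠ 0 := hCQpos.ne'
    have hCPCQ : CP * CQ * ε = β - β1 := by rw [hεdef]; field_simp
    calc ‖L (S w - wstar)‖
        = ‖L (Matrix.toEuclideanLin A (w - wstar))
            + L (S w - wstar - Matrix.toEuclideanLin A (w - wstar))‖ := by
          rw [← map_add, ← hsplit]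
      _ ≤ ‖L (Matrix.toEuclideanLin A (w - wstar))‖
            + ‖L (S w - wstar - Matrix.toEuclideanLin A (w - wstar))‖ := norm_add_le _ _
      _ ≤ β1 * ‖L (w - wstar)‖ + CP * ‖S w - wstar - Matrix.toEuclideanLin A (w - wstar)‖ :=
          add_le_add (hcontr _) (hCP _)
      _ ≤ β1 * ‖L (w - wstar)‖ + CP * (ε * ‖w - wstar‖) := by
          have h5 := mul_le_mul_of_nonneg_left herr hCPpos.le
          linarith
      _ ≤ β1 * ‖L (w - wstar)‖ + CP * (ε * (CQ * ‖L (w - wstar)‖)) := by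
          have h3 := hCQ (w - wstar)
          have h5 := mul_le_mul_of_nonneg_left h3 (mul_nonneg hCPpos.le hεpos.le)
          nlinarith
      _ = β * ‖L (w - wstar)‖ := by
          linear_combination ‖L (w - wstar)‖ * hCPCQ
  -- Step 5 : the invariant neighborhood
  set U : Set (EuclideanSpace ℝ (Fin m)) := {w | ‖L (w - wstar)‖ < δ / CQ} with hUdef
  have hUopen : IsOpen U := isOpen_lt hLcont continuous_const
  have hwstarU : wstar ∈ U := by
    simp only [hUdef, Set.mem_setOf_eq, sub_self, map_zero, norm_zero]
    positivity
  have hmemdelta : ∀ w ∈ U, ‖w - wstar‖ < δ := by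
    intro w hw
    have h2 : ‖L (w - wstar)‖ < δ / CQ := hw
    calc ‖w - wstar‖ ≤ CQ * ‖L (w - wstar)‖ := hCQ _
      _ < CQ * (δ / CQ) := mul_lt_mul_of_pos_left h2 hCQpos
      _ = δ := by field_simp
  have hSU : ∀ w ∈ U, S w ∈ U ∧ ‖L (S w - wstar)‖ ≤ β * ‖L (w - wstar)‖ := by
    intro w hw
    have h1 := hstep w (hmemdelta w hw)
    refine ⟨?_, h1⟩
    have h2 : ‖L (w - wstar)‖ < δ / CQ := hw
    show ‖L (S w - wstar)‖ < δ / CQ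
    calc ‖L (S w - wstar)‖ ≤ β * ‖L (w - wstar)‖ := h1
      _ ≤ 1 * ‖L (w - wstar)‖ := mul_le_mul_of_nonneg_right hβ1.le (norm_nonneg _)
      _ = ‖L (w - wstar)‖ := one_mul _
      _ < δ / CQ := h2
  have hiter : ∀ k : ℕ, ∀ w ∈ U, S^[k] w ∈ U ∧
      ‖L (S^[k] w - wstar)‖ ≤ β ^ k * ‖L (w - wstar)‖ := by
    intro k
    induction k with
    | zero =>
      intro w hw
      rw [Function.iterate_zero_apply, pow_zero, one_mul]
      exact ⟨hw, le_refl _⟩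
    | succ k ih =>
      intro w hw
      obtain ⟨hmem, hbound⟩ := ih w hw
      obtain ⟨hmem2, hbound2⟩ := hSU _ hmem
      rw [Function.iterate_succ_apply']
      refine ⟨hmem2, ?_⟩
      calc ‖L (S (S^[k] w) - wstar)‖ ≤ β * ‖L (S^[k] w - wstar)‖ := hbound2
        _ ≤ β * (β ^ k * ‖L (w - wstar)‖) := mul_le_mul_of_nonneg_left hbound hβpos.le
        _ = β ^ (k + 1) * ‖L (w - wstar)‖ := by ring
  refine ⟨U, hUopen, hwstarU, β, hrβ, hβ1, L, fun w hw k => (hiter k w hw).2, ?_⟩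
  intro w0 hw0
  rw [tendsto_iff_dist_tendsto_zero]
  have hb : ∀ k : ℕ, dist (S^[k] w0) wstar ≤ (CQ * ‖L (w0 - wstar)‖) * β ^ k := by
    intro k
    rw [dist_eq_norm]
    calc ‖S^[k] w0 - wstar‖ ≤ CQ * ‖L (S^[k] w0 - wstar)‖ := hCQ _
      _ ≤ CQ * (β ^ k * ‖L (w0 - wstar)‖) :=
          mul_le_mul_of_nonneg_left (hiter k w0 hw0).2 hCQpos.le
      _ = (CQ * ‖L (w0 - wstar)‖) * β ^ k := by ring
  have hβt : Tendsto (fun k : ℕ => (CQ * ‖L (w0 - wstar)‖) * β ^ k) atTop (nhds 0) := by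
    have := (tendsto_pow_atTop_nhds_zero_of_lt_one hβpos.le hβ1).const_mul
      (CQ * ‖L (w0 - wstar)‖)
    simpa using this
  exact squeeze_zero (fun k => dist_nonneg) hb hβt
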